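/- If G is an upper-critical graph, x is a vertex of G, and G' is obtained from G by adding a new vertex y adjacent exactly to the neighbors of x (a copy of x), then G' is also upper-critical and χ(G') = χ(G). -/

import Mathlib

open SimpleGraph

/-- A graph is *upper-critical* if adding any edge between two distinct
non-adjacent vertices strictly increases the chromatic number. -/
def UpperCritical {V : Type*} (G : SimpleGraph V) : Prop :=
  ∀ x y : V, x ≠ y → ¬G.Adj x y →
    G.chromaticNumber < (G ⊔ SimpleGraph.edge x y).chromaticNumber

private lemma homColorable {V W : Type*} {A : SimpleGraph V} {B : SimpleGraph W}
    (f : A →g B) {n : ℕ} (h : B.Colorable n) : A.Colorable n :=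
  h.elim fun C => ⟨C.comp f⟩

private lemma homChromLe {V W : Type*} {A : SimpleGraph V} {B : SimpleGraph W}
    (f : A →g B) : A.chromaticNumber ≤ B.chromaticNumber :=
  chromaticNumber_le_of_forall_imp fun _ => homColorable f

private lemma edgeComm {V : Type*} (s t : V) :
    SimpleGraph.edge s t = SimpleGraph.edge t s := by
  ext a b; rw [edge_adj, edge_adj]; tauto

/-- A hom extends to a hom after adding an edge, provided the images of the endpoints differ. -/
private def supEdgeHom {V W : Type*} {A : SimpleGraph V} {B : SimpleGraph W}
    (f : A →g B) (s t : V) (hst : f s ≠ f t) :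
    (A ⊔ SimpleGraph.edge s t) →g (B ⊔ SimpleGraph.edge (f s) (f t)) := by
  refine ⟨f, ?_⟩
  intro v w h
  cases h with
  | inl h => exact Or.inl (f.map_rel h)
  | inr h =>
    rw [edge_adj] at h
    rcases h.1 with ⟨rfl, rfl⟩ | ⟨rfl, rfl⟩
    · exact Or.inr (by rw [edge_adj]; exact ⟨Or.inl ⟨rfl, rfl⟩, hst⟩)
    · exact Or.inr (by rw [edge_adj]; exact ⟨Or.inr ⟨rfl, rfl⟩, hst.symm⟩)

theorem stmt_4 {V : Type*} [Fintype V] (G : SimpleGraph V) (hUC : UpperCritical G)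
    (x : V) (G' : SimpleGraph (Option V))
    (hsome : ∀ a b : V, G'.Adj (some a) (some b) ↔ G.Adj a b)
    (hnew : ∀ a : V, G'.Adj none (some a) ↔ G.Adj x a) :
    UpperCritical G' ∧ G'.chromaticNumber = G.chromaticNumber := by
  classical
  -- basic homomorphisms
  let f0 : G' →g G := by
    refine ⟨fun o => o.getD x, ?_⟩
    intro u v h
    match u, v with
    | none, none => exact absurd h (G'.loopless.irrefl none)
    | none, some b => exact (hnew b).mp h
    | some a, none => exact ((hnew a).mp h.symm).symm
    | some a, some b => exact (hsome a b).mp h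
  let f1 : G →g G' := ⟨some, fun {a b} h => (hsome a b).mpr h⟩
  let f2 : G →g G' := by
    refine ⟨fun v => if v = x then none else some v, ?_⟩
    intro a b h
    by_cases hax : a = x <;> by_cases hbx : b = x
    · rw [hax, hbx] at h; exact absurd h (G.loopless.irrefl x)
    · subst hax; simpa [hbx] using (hnew b).mpr h
    · subst hbx; simpa [hax] using ((hnew a).mpr h.symm).symm
    · simpa [hax, hbx] using (hsome a b).mpr h
  have heq : G'.chromaticNumber = G.chromaticNumber :=
    le_antisymm (homChromLe f0) (homChromLe f1)
  -- the chromatic number of G as a natural number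
  have hcol := G.colorable_of_fintype
  have hne : G.chromaticNumber ≠ ⊤ :=
    (hcol.chromaticNumber_le.trans_lt (WithTop.coe_lt_top _)).ne
  obtain ⟨n, hn⟩ : ∃ n : ℕ, G.chromaticNumber = (n : ℕ∞) :=
    ⟨G.chromaticNumber.toNat, (ENat.coe_toNat hne).symm⟩
  have hGn : G.Colorable n := chromaticNumber_le_iff_colorable.mp hn.le
  have step : ∀ H : SimpleGraph (Option V), ¬H.Colorable n →
      G'.chromaticNumber < H.chromaticNumber := by
    intro H hH
    rw [heq, hn]
    exact not_le.mp fun hle => hH (chromaticNumber_le_iff_colorable.mp hle)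
  have key : ∀ a b : V, a ≠ b → ¬G.Adj a b → ¬(G ⊔ SimpleGraph.edge a b).Colorable n := by
    intro a b hab hnadj hc
    exact (hUC a b hab hnadj).not_ge (hn ▸ hc.chromaticNumber_le)
  -- in every n-coloring, non-adjacent vertices get the same color
  have same : ∀ a b : V, a ≠ b → ¬G.Adj a b → ∀ D : G.Coloring (Fin n), D a = D b := by
    intro a b hab hnadj D
    by_contra hne'
    refine key a b hab hnadj ⟨Coloring.mk D ?_⟩
    intro v w h
    cases h with
    | inl h => exact D.valid h
    | inr h =>
      rw [edge_adj] at h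
      rcases h.1 with ⟨rfl, rfl⟩ | ⟨rfl, rfl⟩
      · exact hne'
      · exact fun h' => hne' h'.symm
  -- main case: adding the edge from `none` to `some a`
  have mainNone : ∀ a : V, ¬G'.Adj none (some a) →
      G'.chromaticNumber < (G' ⊔ SimpleGraph.edge none (some a)).chromaticNumber := by
    intro a hnadj
    have hxa : ¬G.Adj x a := fun h => hnadj ((hnew a).mpr h)
    by_cases hax : a = x
    · subst hax
      -- twin case
      apply step
      by_cases hex : ∃ b, b ≠ a ∧ ¬G.Adj a b
      · obtain ⟨b, hba, hnadj2⟩ := hex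
        rintro ⟨C⟩
        have hC1 : C (some a) = C (some b) :=
          same a b (fun h => hba h.symm) hnadj2 (C.comp ((Hom.ofLE le_sup_left).comp f1))
        have hC2 : C none = C (some b) := by
          have h := same a b (fun h => hba h.symm) hnadj2
            (C.comp ((Hom.ofLE le_sup_left).comp f2))
          have ea : (C.comp ((Hom.ofLE le_sup_left).comp f2)) a = C none :=
            congrArg C (if_pos rfl)
          have eb : (C.comp ((Hom.ofLE le_sup_left).comp f2)) b = C (some b) :=
            congrArg C (if_neg hba)
          exact ea.symm.trans (h.trans eb)
        have hadj : (G' ⊔ SimpleGraph.edge none (some a)).Adj none (some a) :=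
          Or.inr (by rw [edge_adj]; exact ⟨Or.inl ⟨rfl, rfl⟩, by simp⟩)
        exact C.valid hadj (hC2.trans hC1.symm)
      · push_neg at hex
        rintro ⟨C⟩
        have hall : ∀ b : V, C (some b) ≠ C none := by
          intro b
          by_cases hba : b = a
          · subst hba
            have hadj : (G' ⊔ SimpleGraph.edge none (some b)).Adj (some b) none :=
              Or.inr (by rw [edge_adj]; exact ⟨Or.inr ⟨rfl, rfl⟩, by simp⟩)
            exact C.valid hadj
          · have hadj : (G' ⊔ SimpleGraph.edge none (some a)).Adj (some b) none :=
              Or.inl ((hnew b).mpr (hex b (fun h => hba h))).symm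
            exact C.valid hadj
        have hn0 : n ≠ 0 := by
          intro h
          subst h
          exact (G.isEmpty_of_colorable_zero hGn).false a
        have D : G.Coloring {i : Fin n // i ≠ C none} := by
          refine Coloring.mk (fun b => ⟨C (some b), hall b⟩) ?_
          intro v w h hvw
          exact C.valid (Or.inl ((hsome v w).mpr h)) (congrArg Subtype.val hvw)
        have hcard : Fintype.card {i : Fin n // i ≠ C none} = n - 1 := by
          simp [Fintype.card_subtype_compl]
        have hcol' : G.Colorable (n - 1) := hcard ▸ D.colorable
        have hle := hn ▸ hcol'.chromaticNumber_le
        exact absurd hle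
          (not_le.mpr (Nat.cast_lt.mpr (Nat.sub_lt (Nat.pos_of_ne_zero hn0) one_pos)))
    · -- a ≠ x : use the homomorphism sending x to none
      have hhom : (G ⊔ SimpleGraph.edge x a) →g (G' ⊔ SimpleGraph.edge none (some a)) := by
        have h1 : f2 x = none := if_pos rfl
        have h2 : f2 a = some a := if_neg hax
        have := supEdgeHom f2 x a (by rw [h1, h2]; exact (Option.some_ne_none a).symm)
        rwa [h1, h2] at this
      exact step _ fun hc =>
        key x a (fun h => hax h.symm) hxa (homColorable hhom hc)
  constructor
  · intro u v huv hnadj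
    match u, v with
    | none, none => exact absurd rfl huv
    | none, some a => exact mainNone a hnadj
    | some a, none =>
      rw [edgeComm]
      exact mainNone a fun h => hnadj h.symm
    | some a, some b =>
      have hab : a ≠ b := fun h => huv (by rw [h])
      have hnadj' : ¬G.Adj a b := fun h => hnadj ((hsome a b).mpr h)
      have hhom := supEdgeHom f1 a b (fun h => hab (Option.some_injective V h))
      exact step _ fun hc => key a b hab hnadj' (homColorable hhom hc)
  · exact heq
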